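/- Assume a = 1/4 (with b, d, e ∈ ℝ arbitrary). Let u be a solution of the Longstaff–Schwartz equation on Ω, and let ε ∈ ℝ. Then the function w(x,y,t) = u( (2·e^{bt/2}·√x − ε)² · e^{-bt}/4, y, t ) satisfies the Longstaff–Schwartz equation at every point (x,y,t) ∈ Ω with 2·e^{bt/2}·√x > ε. -/

import Mathlib

/-- Partial derivative in `x`. -/
noncomputable def pdX (u : ℝ → ℝ → ℝ → ℝ) (x y t : ℝ) : ℝ := deriv (fun z => u z y t) x

/-- Partial derivative in `y`. -/
noncomputable def pdY (u : ℝ → ℝ → ℝ → ℝ) (x y t : ℝ) : ℝ := deriv (fun z => u x z t) y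

/-- Partial derivative in `t`. -/
noncomputable def pdT (u : ℝ → ℝ → ℝ → ℝ) (x y t : ℝ) : ℝ := deriv (fun z => u x y z) t

/-- Second partial derivative in `x`. -/
noncomputable def pdXX (u : ℝ → ℝ → ℝ → ℝ) (x y t : ℝ) : ℝ := deriv (fun z => pdX u z y t) x

/-- Second partial derivative in `y`. -/
noncomputable def pdYY (u : ℝ → ℝ → ℝ → ℝ) (x y t : ℝ) : ℝ := deriv (fun z => pdY u x z t) y

/-- The domain `Ω = {(x,y,t) : x > 0, y > 0}`. -/
def Omega : Set (ℝ × ℝ × ℝ) := {p | 0 < p.1 ∧ 0 < p.2.1}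

/-- The Longstaff–Schwartz (Kolmogorov backward) equation
`u_t = −((a−bx)·u_x + (d−ey)·u_y + (x/2)·u_xx + (y/2)·u_yy)` holds at the point `(x,y,t)`. -/
def LSEq (a b d e : ℝ) (u : ℝ → ℝ → ℝ → ℝ) (x y t : ℝ) : Prop :=
  pdT u x y t =
    -((a - b * x) * pdX u x y t + (d - e * y) * pdY u x y t +
      x / 2 * pdXX u x y t + y / 2 * pdYY u x y t)

/-- `u` is a solution of the Longstaff–Schwartz equation on `Ω`: it is C² on `Ω` and
satisfies the equation at every point of `Ω`. -/
def IsLSSolution (a b d e : ℝ) (u : ℝ → ℝ → ℝ → ℝ) : Prop :=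
  ContDiffOn ℝ 2 (fun p : ℝ × ℝ × ℝ => u p.1 p.2.1 p.2.2) Omega ∧
  ∀ x y t : ℝ, 0 < x → 0 < y → LSEq a b d e u x y t

lemma key_alg (b s ε q : ℝ) :
    (2 * Real.exp (b * s / 2) * q - ε) ^ 2 * Real.exp (-(b * s)) / 4
      = (q - ε * Real.exp (-(b * s) / 2) / 2) ^ 2 := by
  have hEF : Real.exp (b * s / 2) * Real.exp (-(b * s) / 2) = 1 := by
    rw [← Real.exp_add]; ring_nf; exact Real.exp_zero
  have hF2 : Real.exp (-(b * s)) = Real.exp (-(b * s) / 2) * Real.exp (-(b * s) / 2) := by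
    rw [← Real.exp_add]; ring_nf
  rw [hF2]
  set E := Real.exp (b * s / 2)
  set F := Real.exp (-(b * s) / 2)
  linear_combination (q ^ 2 * (E * F + 1) - ε * q * F) * hEF

lemma omega_open : IsOpen Omega := by
  have : Omega = (Set.Ioi 0) ×ˢ ((Set.Ioi 0) ×ˢ (Set.univ : Set ℝ)) := by
    ext p; simp [Omega, Set.mem_prod]
  rw [this]; exact isOpen_Ioi.prod (isOpen_Ioi.prod isOpen_univ)

/-- Symmetry of the Longstaff–Schwartz equation when `a = 1/4` (subcase 3.1, group `G₄`). -/
theorem ls_symmetry_a_quarter_translation (a b d e : ℝ) (ha : a = 1 / 4)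
    (u : ℝ → ℝ → ℝ → ℝ) (hu : IsLSSolution a b d e u) (ε : ℝ) :
    ∀ x y t : ℝ, 0 < x → 0 < y → 2 * Real.exp (b * t / 2) * Real.sqrt x > ε →
      LSEq a b d e
        (fun x y t =>
          u ((2 * Real.exp (b * t / 2) * Real.sqrt x - ε) ^ 2 * Real.exp (-(b * t)) / 4) y t)
        x y t := by
  intro x y t hx hy hε
  set w : ℝ → ℝ → ℝ → ℝ := fun x y t =>
    u ((2 * Real.exp (b * t / 2) * Real.sqrt x - ε) ^ 2 * Real.exp (-(b * t)) / 4) y t with hw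
  set F : ℝ × ℝ × ℝ → ℝ := fun p => u p.1 p.2.1 p.2.2 with hFdef
  have hF : ContDiffOn ℝ 2 F Omega := hu.1
  set c : ℝ := ε * Real.exp (-(b * t) / 2) / 2 with hc
  set r : ℝ := Real.sqrt x with hrdef
  have hr : 0 < r := Real.sqrt_pos.mpr hx
  have hr2 : r * r = x := Real.mul_self_sqrt hx.le
  have hSc : c < r := by
    have hEF : Real.exp (b * t / 2) * Real.exp (-(b * t) / 2) = 1 := by
      rw [← Real.exp_add]; ring_nf; exact Real.exp_zero
    have hFpos : 0 < Real.exp (-(b * t) / 2) := Real.exp_pos _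
    have h1 := mul_lt_mul_of_pos_right hε (half_pos hFpos)
    calc c = ε * (Real.exp (-(b * t) / 2) / 2) := by rw [hc]; ring
    _ < 2 * Real.exp (b * t / 2) * r * (Real.exp (-(b * t) / 2) / 2) := h1
    _ = r * (Real.exp (b * t / 2) * Real.exp (-(b * t) / 2)) := by ring
    _ = r := by rw [hEF]; ring
  set S : ℝ := r - c with hSdef
  have hS : 0 < S := sub_pos.mpr hSc
  set φ : ℝ := S ^ 2 with hφdef
  have hφ : 0 < φ := by positivity
  have hpΩ : ((φ, y, t) : ℝ × ℝ × ℝ) ∈ Omega := ⟨hφ, hy⟩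
  -- x-slice
  set f : ℝ → ℝ := fun z => u z y t with hfdef
  have hfC : ContDiffOn ℝ 2 f (Set.Ioi 0) := by
    have hι : ContDiff ℝ 2 (fun z : ℝ => ((z, y, t) : ℝ × ℝ × ℝ)) :=
      contDiff_id.prodMk contDiff_const
    exact hF.comp hι.contDiffOn (fun z hz => ⟨hz, hy⟩)
  have hf1 : ∀ z : ℝ, 0 < z → DifferentiableAt ℝ f z := fun z hz =>
    (hfC.differentiableOn (by norm_num)).differentiableAt (isOpen_Ioi.mem_nhds hz)
  have hf2 : DifferentiableAt ℝ (deriv f) φ := by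
    have h1 : ContDiffOn ℝ 1 (deriv f) (Set.Ioi 0) :=
      hfC.deriv_of_isOpen isOpen_Ioi (by norm_num)
    exact (h1.differentiableOn one_ne_zero).differentiableAt (isOpen_Ioi.mem_nhds hφ)
  -- the inner x-substitution
  have hψfun : (fun z => u ((2 * Real.exp (b * t / 2) * Real.sqrt z - ε) ^ 2
        * Real.exp (-(b * t)) / 4) y t)
      = fun z => f ((Real.sqrt z - c) ^ 2) := by
    funext z; rw [key_alg, hc]
  have hψd : ∀ z : ℝ, 0 < z →
      HasDerivAt (fun z' => (Real.sqrt z' - c) ^ 2)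
        ((Real.sqrt z - c) / Real.sqrt z) z := by
    intro z hz
    have hsz : (0:ℝ) < Real.sqrt z := Real.sqrt_pos.mpr hz
    have hsq : HasDerivAt Real.sqrt (1 / (2 * Real.sqrt z)) z :=
      Real.hasDerivAt_sqrt (ne_of_gt hz)
    have h := (hsq.sub_const c).pow 2
    refine h.congr_deriv ?_
    rw [show ((2:ℕ):ℝ) = 2 by norm_num, show (2:ℕ) - 1 = 1 from rfl, pow_one]
    field_simp
  have hXgen : ∀ z : ℝ, 0 < z → c < Real.sqrt z →
      HasDerivAt (fun z' => f ((Real.sqrt z' - c) ^ 2))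
        (deriv f ((Real.sqrt z - c) ^ 2) * ((Real.sqrt z - c) / Real.sqrt z)) z := by
    intro z hz hcz
    have hfz : DifferentiableAt ℝ f ((Real.sqrt z - c) ^ 2) :=
      hf1 _ (pow_pos (sub_pos.mpr hcz) 2)
    exact hfz.hasDerivAt.comp z (hψd z hz)
  have hcx : c < Real.sqrt x := by rw [← hrdef]; exact hSc
  have hφx : (Real.sqrt x - c) ^ 2 = φ := by rw [← hrdef]
  -- pdX of w
  have hpdXw : pdX w x y t = deriv f φ * (S / r) := by
    simp only [pdX, hw]
    rw [hψfun, (hXgen x hx hcx).deriv, hφx, ← hrdef]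
  -- pdXX of w
  have hev : ∀ᶠ z in nhds x, (fun z => pdX w z y t) z
      = (fun z => deriv f ((Real.sqrt z - c) ^ 2) * ((Real.sqrt z - c) / Real.sqrt z)) z := by
    have h1 : ∀ᶠ z in nhds x, 0 < z := eventually_gt_nhds hx
    have h2 : ∀ᶠ z in nhds x, c < Real.sqrt z :=
      (Real.continuous_sqrt.continuousAt).eventually (eventually_gt_nhds hcx)
    filter_upwards [h1, h2] with z hz hcz
    simp only [pdX, hw]
    rw [hψfun, (hXgen z hz hcz).deriv]
  have hpdXXw : pdXX w x y t
      = (deriv (deriv f) φ * (S / r)) * (S / r)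
        + deriv f φ * ((1 / (2 * r) * r - S * (1 / (2 * r))) / r ^ 2) := by
    simp only [pdXX]
    rw [Filter.EventuallyEq.deriv_eq hev]
    have hsq : HasDerivAt Real.sqrt (1 / (2 * Real.sqrt x)) x :=
      Real.hasDerivAt_sqrt (ne_of_gt hx)
    have hA : HasDerivAt (fun z => deriv f ((Real.sqrt z - c) ^ 2))
        (deriv (deriv f) φ * (S / r)) x := by
      have hf2' : HasDerivAt (deriv f) (deriv (deriv f) φ) ((Real.sqrt x - c) ^ 2) := by
        rw [hφx]; exact hf2.hasDerivAt
      have := hf2'.comp x (hψd x hx)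
      rw [← hrdef] at this
      exact this
    have hB : HasDerivAt (fun z => (Real.sqrt z - c) / Real.sqrt z)
        ((1 / (2 * r) * r - S * (1 / (2 * r))) / r ^ 2) x := by
      have h := (hsq.sub_const c).div hsq (by rw [← hrdef]; exact ne_of_gt hr)
      rw [← hrdef] at h
      exact h
    exact (hA.mul hB).deriv
  -- pdY, pdYY of w
  have hexpr : (2 * Real.exp (b * t / 2) * Real.sqrt x - ε) ^ 2 * Real.exp (-(b * t)) / 4 = φ := by
    rw [key_alg, ← hrdef, ← hc]
  have hpdYw : pdY w x y t = pdY u φ y t := by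
    simp only [pdY, hw, hexpr]
  have hpdYYw : pdYY w x y t = pdYY u φ y t := by
    simp only [pdYY, pdY, hw, hexpr]
  -- pdT of w
  have hFdiff : DifferentiableAt ℝ F (φ, y, t) :=
    (hF.differentiableOn (by norm_num)).differentiableAt (omega_open.mem_nhds hpΩ)
  set L := fderiv ℝ F (φ, y, t) with hL
  have hC : HasDerivAt (fun s => ε * Real.exp (-(b * s) / 2) / 2)
      (ε * (Real.exp (-(b * t) / 2) * (-(b * 1) / 2)) / 2) t := by
    have h0 : HasDerivAt (fun s : ℝ => -(b * s) / 2) (-(b * 1) / 2) t :=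
      (((hasDerivAt_id t).const_mul b).neg).div_const 2
    exact ((h0.exp).const_mul ε).div_const 2
  have hval : 2 * (r - ε * Real.exp (-(b * t) / 2) / 2) ^ 1
      * (0 - ε * (Real.exp (-(b * t) / 2) * (-(b * 1) / 2)) / 2) = b * c * S := by
    rw [hSdef, hc]; ring
  have hΦ : HasDerivAt (fun s => (r - ε * Real.exp (-(b * s) / 2) / 2) ^ 2) (b * c * S) t := by
    have h := ((hasDerivAt_const t r).sub hC).pow 2
    rw [show ((2:ℕ) : ℝ) = (2:ℝ) from rfl] at h
    rw [← hval]
    exact h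
  have hγ : HasDerivAt (fun s => (((r - ε * Real.exp (-(b * s) / 2) / 2) ^ 2 : ℝ), y, s))
      ((b * c * S, 0, 1) : ℝ × ℝ × ℝ) t :=
    hΦ.prodMk ((hasDerivAt_const t y).prodMk (hasDerivAt_id t))
  have hTcomp : HasDerivAt (fun s => F ((r - ε * Real.exp (-(b * s) / 2) / 2) ^ 2, y, s))
      (L ((b * c * S, 0, 1) : ℝ × ℝ × ℝ)) t := by
    have h := hFdiff.hasFDerivAt.comp_hasDerivAt t hγ
    exact h
  have hTfun : (fun s => w x y s)
      = fun s => F ((r - ε * Real.exp (-(b * s) / 2) / 2) ^ 2, y, s) := by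
    funext s
    simp only [hw, hFdef]
    rw [key_alg, ← hrdef]
  have hpdTw : pdT w x y t = L ((b * c * S, 0, 1) : ℝ × ℝ × ℝ) := by
    simp only [pdT]
    rw [hTfun, hTcomp.deriv]
  -- identify L directions with partials of u
  have hL1 : L ((1, 0, 0) : ℝ × ℝ × ℝ) = pdX u φ y t := by
    have hι : HasDerivAt (fun z : ℝ => ((z, y, t) : ℝ × ℝ × ℝ)) ((1, 0, 0) : ℝ × ℝ × ℝ) φ :=
      (hasDerivAt_id φ).prodMk ((hasDerivAt_const φ y).prodMk (hasDerivAt_const φ t))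
    have h := hFdiff.hasFDerivAt.comp_hasDerivAt φ hι
    exact (h.deriv).symm
  have hL3 : L ((0, 0, 1) : ℝ × ℝ × ℝ) = pdT u φ y t := by
    have hι : HasDerivAt (fun s : ℝ => ((φ, y, s) : ℝ × ℝ × ℝ)) ((0, 0, 1) : ℝ × ℝ × ℝ) t :=
      (hasDerivAt_const t φ).prodMk ((hasDerivAt_const t y).prodMk (hasDerivAt_id t))
    have h := hFdiff.hasFDerivAt.comp_hasDerivAt t hι
    exact (h.deriv).symm
  have hlin : L ((b * c * S, 0, 1) : ℝ × ℝ × ℝ)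
      = (b * c * S) * pdX u φ y t + pdT u φ y t := by
    have heq : ((b * c * S, 0, 1) : ℝ × ℝ × ℝ)
        = (b * c * S) • ((1, 0, 0) : ℝ × ℝ × ℝ) + ((0, 0, 1) : ℝ × ℝ × ℝ) := by
      simp [Prod.ext_iff]
    rw [heq, map_add, map_smul, hL1, hL3]
    simp [smul_eq_mul]
  -- the derivatives of f are partials of u at φ
  have hdf : deriv f φ = pdX u φ y t := rfl
  have hddf : deriv (deriv f) φ = pdXX u φ y t := rfl
  -- the PDE for u at (φ, y, t)
  have hPDE := hu.2 φ y t hφ hy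
  rw [LSEq] at hPDE ⊢
  rw [hpdTw, hlin, hpdXw, hpdXXw, hpdYw, hpdYYw, hdf, hddf, hPDE]
  rw [ha] at *
  rw [hφdef, hSdef, ← hr2]
  have hrne : r ≠ 0 := ne_of_gt hr
  field_simp
  ring
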